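/- arXiv:1809.03717 — 5 statements merged into one kernel-verified Lean document; each statement's English description precedes it below -/
import Mathlib

section
/- Let X and Y be compact metrizable spaces, T : X → X and S : Y → Y homeomorphisms, and φ : X → Y a continuous surjection with φ ∘ T = S ∘ φ. If X is countable and y ∈ Y is uniformly recurrent under S, then there exists x ∈ φ⁻¹(y) and k ≥ 1 with T^k(x) = x. -/
/-- The orbit closure of a point under a homeomorphism. -/
def orbitClosure {Y : Type*} [TopologicalSpace Y] (S : Y ≃ₜ Y) (y : Y) : Set Y :=
  closure (Set.range fun n : ℤ => (S.toEquiv ^ n) y)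

/-- `C` is a minimal subsystem for `S`. -/
def IsMinimalOn {Y : Type*} [TopologicalSpace Y] (S : Y ≃ₜ Y) (C : Set Y) : Prop :=
  C.Nonempty ∧ IsClosed C ∧ (⇑S) '' C ⊆ C ∧
    ∀ V : Set Y, V ⊆ C → V.Nonempty → IsClosed V → (⇑S) '' V ⊆ V → V = C

/-- If the cover `X` is countable, a uniformly recurrent point has a periodic preimage. -/
theorem stmt_4 {X Y : Type*} [TopologicalSpace X] [CompactSpace X]
    [TopologicalSpace.MetrizableSpace X] [TopologicalSpace Y] [CompactSpace Y]
    [TopologicalSpace.MetrizableSpace Y]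
    (T : X ≃ₜ X) (S : Y ≃ₜ Y) (φ : X → Y) (hφc : Continuous φ)
    (hφs : Function.Surjective φ) (hcomm : ∀ x : X, φ (T x) = S (φ x))
    (hcount : Countable X)
    (y : Y) (hy : IsMinimalOn S (orbitClosure S y)) :
    ∃ x : X, φ x = y ∧ ∃ k : ℕ, 1 ≤ k ∧ (⇑T)^[k] x = x := by
  classical
  obtain ⟨hCne, hCcl, hCinv, hCmin⟩ := hy
  set C := orbitClosure S y with hCdef
  have hyC : y ∈ C := subset_closure ⟨0, by simp⟩
  -- the preimage of the orbit closure
  set K := φ ⁻¹' C with hKdef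
  have hKcl : IsClosed K := hCcl.preimage hφc
  have hKne : K.Nonempty := by
    obtain ⟨x, hx⟩ := hφs y
    exact ⟨x, by simp [hKdef, hx, hyC]⟩
  have hKinv : (⇑T) '' K ⊆ K := by
    rintro _ ⟨x, hx, rfl⟩
    show φ (T x) ∈ C
    rw [hcomm]
    exact hCinv ⟨φ x, hx, rfl⟩
  -- a minimal closed invariant subset, by Zorn
  set 𝒮 : Set (Set X) := {U | U.Nonempty ∧ IsClosed U ∧ (⇑T) '' U ⊆ U ∧ U ⊆ K} with h𝒮
  have hchaincond : ∀ c ⊆ 𝒮, IsChain (· ⊆ ·) c → c.Nonempty →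
      ∃ lb ∈ 𝒮, ∀ s ∈ c, lb ⊆ s := by
    intro c hc hchain hcne
    haveI : Nonempty c := hcne.to_subtype
    refine ⟨⋂₀ c, ⟨?_, ?_, ?_, ?_⟩, fun s hs => Set.sInter_subset_of_mem hs⟩
    · exact IsCompact.nonempty_sInter_of_directed_nonempty_isCompact_isClosed
        (fun s hs t ht => (hchain.total hs ht).elim
          (fun h => ⟨s, hs, subset_rfl, h⟩) (fun h => ⟨t, ht, h, subset_rfl⟩))
        (fun s hs => (hc hs).1)
        (fun s hs => (hc hs).2.1.isCompact) (fun s hs => (hc hs).2.1)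
    · exact isClosed_sInter fun s hs => (hc hs).2.1
    · rintro _ ⟨x, hx, rfl⟩ s hs
      exact (hc hs).2.2.1 ⟨x, hx s hs, rfl⟩
    · obtain ⟨s, hs⟩ := hcne
      exact (Set.sInter_subset_of_mem hs).trans (hc hs).2.2.2
  obtain ⟨U, -, hUmin⟩ := zorn_superset_nonempty 𝒮 hchaincond K ⟨hKne, hKcl, hKinv, subset_rfl⟩
  obtain ⟨hUne, hUcl, hUinv, hUK⟩ := hUmin.1
  -- U has a point which is not an accumulation point of U
  have hiso : ∃ x ∈ U, ¬ AccPt x (Filter.principal U) := by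
    by_contra h
    push_neg at h
    letI : MetricSpace X := TopologicalSpace.metrizableSpaceMetric X
    have hperf : Perfect U := ⟨hUcl, fun x hx => h x hx⟩
    obtain ⟨f, -, -, hfi⟩ := hperf.exists_nat_bool_injection hUne
    obtain ⟨g, hg⟩ := (countable_iff_exists_injective X).mp hcount
    have he : Function.Injective (fun s : Set ℕ => fun n => decide (n ∈ s)) := by
      intro s t hst
      ext n
      simpa [decide_eq_decide] using congrFun hst n
    exact Function.cantor_injective (g ∘ f ∘ fun s : Set ℕ => fun n => decide (n ∈ s))
      (hg.comp (hfi.comp he))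
  obtain ⟨x, hxU, hxacc⟩ := hiso
  -- forward orbit of x
  have hmem : ∀ n : ℕ, (⇑T)^[n] x ∈ U := by
    intro n
    induction n with
    | zero => simpa using hxU
    | succ n ih => rw [Function.iterate_succ_apply']; exact hUinv ⟨_, ih, rfl⟩
  set O : Set X := Set.range fun n : ℕ => (⇑T)^[n+1] x with hOdef
  have hOU : O ⊆ U := by rintro _ ⟨n, rfl⟩; exact hmem (n + 1)
  have hclO : closure O = U := by
    have hsub : closure O ⊆ U := closure_minimal hOU hUcl
    refine hsub.antisymm (hUmin.2 ⟨?_, isClosed_closure, ?_, hsub.trans hUK⟩ hsub)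
    · exact ⟨_, subset_closure ⟨0, rfl⟩⟩
    · have himg : (⇑T) '' O ⊆ O := by
        rintro _ ⟨_, ⟨n, rfl⟩, rfl⟩
        refine ⟨n + 1, ?_⟩
        show (⇑T)^[n + 1 + 1] x = T ((⇑T)^[n + 1] x)
        exact Function.iterate_succ_apply' (⇑T) (n + 1) x
      calc (⇑T) '' closure O ⊆ closure ((⇑T) '' O) := image_closure_subset_closure_image T.continuous
        _ ⊆ closure O := closure_mono himg
  -- x must be on its own forward orbit, giving periodicity
  have hxO : x ∈ O := by
    by_contra hxO
    apply hxacc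
    have hx_clO : x ∈ closure O := hclO ▸ hxU
    have : O \ {x} = O := Set.diff_singleton_eq_self hxO
    have hacc : AccPt x (Filter.principal O) := by
      rw [accPt_principal_iff_clusterPt, this]
      exact mem_closure_iff_clusterPt.mp hx_clO
    exact hacc.mono (Filter.principal_mono.mpr hOU)
  obtain ⟨n, hn⟩ := hxO
  set k := n + 1 with hkdef
  have hper : (⇑T)^[k] x = x := hn
  -- every point of the finite orbit is k-periodic
  have hper' : ∀ i : ℕ, (⇑T)^[k] ((⇑T)^[i] x) = (⇑T)^[i] x := by
    intro i
    rw [← Function.iterate_add_apply, Nat.add_comm, Function.iterate_add_apply, hper]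
  -- the finite orbit set
  set P : Set X := Set.range fun i : Fin k => (⇑T)^[(i : ℕ)] x with hPdef
  have hPfin : P.Finite := Set.finite_range _
  have hPU : P ⊆ U := by rintro _ ⟨i, rfl⟩; exact hmem i
  have hPinv : (⇑T) '' P = P := by
    apply Set.Subset.antisymm
    · rintro _ ⟨_, ⟨i, rfl⟩, rfl⟩
      rcases Nat.lt_or_ge ((i : ℕ) + 1) k with hik | hik
      · refine ⟨⟨(i : ℕ) + 1, hik⟩, ?_⟩
        show (⇑T)^[(i : ℕ) + 1] x = T ((⇑T)^[(i : ℕ)] x)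
        exact Function.iterate_succ_apply' (⇑T) (i : ℕ) x
      · have : (i : ℕ) + 1 = k := le_antisymm (Nat.succ_le_of_lt i.2) hik
        refine ⟨⟨0, Nat.succ_pos n⟩, ?_⟩
        simp only [Function.iterate_zero_apply]
        rw [← Function.iterate_succ_apply' (⇑T) (i : ℕ) x]
        rw [show (i : ℕ).succ = k from this, hper]
    · rintro _ ⟨i, rfl⟩
      rcases Nat.eq_zero_or_pos (i : ℕ) with h0 | hpos
      · refine ⟨(⇑T)^[n] x, ⟨⟨n, Nat.lt_succ_self n⟩, rfl⟩, ?_⟩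
        rw [← Function.iterate_succ_apply' (⇑T) n x]
        simp only [h0, Function.iterate_zero_apply]
        exact hper
      · refine ⟨(⇑T)^[(i : ℕ) - 1] x, ⟨⟨(i : ℕ) - 1, lt_of_le_of_lt (Nat.sub_le _ _) i.2⟩, rfl⟩, ?_⟩
        rw [← Function.iterate_succ_apply' (⇑T) ((i : ℕ) - 1) x,
          Nat.succ_eq_add_one, Nat.sub_add_cancel hpos]
  have hPU' : P = U := by
    refine Set.Subset.antisymm hPU (hUmin.2 ⟨⟨x, ⟨⟨0, Nat.succ_pos n⟩, rfl⟩⟩,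
      hPfin.isClosed, hPinv.le, hPU.trans hUK⟩ hPU)
  -- φ '' U is a closed invariant subset of the orbit closure, hence all of it
  have hφU : (⇑S) '' (φ '' U) = φ '' U := by
    rw [← hPU', ← Set.image_comp]
    have : (⇑S) ∘ φ = φ ∘ (⇑T) := by ext z; exact (hcomm z).symm
    rw [this, Set.image_comp, hPinv]
  have hφUC : φ '' U = C := by
    apply hCmin
    · rintro _ ⟨u, hu, rfl⟩; exact hUK hu
    · exact hUne.image φ
    · exact (((hPU' ▸ hPfin).image φ).isClosed)
    · exact hφU.le
  obtain ⟨x₀, hx₀U, hx₀⟩ : ∃ x₀ ∈ U, φ x₀ = y := by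
    have := hφUC ▸ hyC
    obtain ⟨x₀, hx₀U, hx₀⟩ := this
    exact ⟨x₀, hx₀U, hx₀⟩
  rw [← hPU'] at hx₀U
  obtain ⟨i, hi⟩ := hx₀U
  exact ⟨x₀, hx₀, k, Nat.succ_le_succ (Nat.zero_le n), by rw [← hi]; exact hper' i⟩
end

section
/- Let Z ⊆ {0,1}^ℤ be the shift space defined by forbidding the words 0^m 1 0^m 1 for all m > 0, and 1 0ⁿ 1 1 and 1 0ⁿ 1 0^{n+2} for all n ≥ 0. Then the configuration z = ⋯000.110100100010000⋯ (where the blocks of 0s between consecutive 1s have lengths 0, 1, 2, 3, … from left to right, with all 0s to the left) belongs to Z, and z is not ultimately periodic to the right. -/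
/-- The word `p` occurs in the configuration `x` (at some position). -/
def occursIn {A : Type*} (p : List A) (x : ℤ → A) : Prop :=
  ∃ i : ℤ, ∀ j : Fin p.length, x (i + (j : ℕ)) = p.get j

/-- The forbidden words `0^m 1 0^m 1` (m > 0), `1 0^n 1 1` and `1 0^n 1 0^(n+2)` (n ≥ 0),
with `false` playing the role of `0` and `true` of `1`. -/
def Forb : Set (List Bool) :=
  {w | ∃ m : ℕ, 0 < m ∧
      w = List.replicate m false ++ [true] ++ List.replicate m false ++ [true]} ∪
  {w | ∃ n : ℕ, w = [true] ++ List.replicate n false ++ [true, true]} ∪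
  {w | ∃ n : ℕ, w = [true] ++ List.replicate n false ++ [true] ++ List.replicate (n + 2) false}

/-- The shift space defined by the forbidden words `Forb`. -/
def Zspace : Set (ℤ → Bool) := {x | ∀ w ∈ Forb, ¬ occursIn w x}

attribute [local instance] Classical.propDecidable

/-- The configuration `z = ⋯000.110100100010000⋯`: its `1`s sit exactly at the
triangular numbers, so the gaps between consecutive `1`s are 0, 1, 2, 3, …. -/
noncomputable def zConf : ℤ → Bool := fun n =>
  if ∃ k : ℕ, n = (k * (k + 1) / 2 : ℕ) then true else false

/-- Triangular numbers. -/
def tri (k : ℕ) : ℕ := k * (k + 1) / 2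

lemma tri_succ (k : ℕ) : tri (k + 1) = tri k + (k + 1) := by
  have h : (k + 1) * ((k + 1) + 1) = k * (k + 1) + 2 * (k + 1) := by ring
  unfold tri; omega

lemma tri_strictMono : StrictMono tri :=
  strictMono_nat_of_lt_succ (fun n => by rw [tri_succ]; omega)

lemma tri_ge (k : ℕ) : k ≤ tri k := by
  induction k with
  | zero => simp [tri]
  | succ n ih => have := tri_succ n; omega

lemma zConf_eq_true_iff (n : ℤ) : zConf n = true ↔ ∃ k : ℕ, n = (tri k : ℤ) := by
  unfold zConf tri; split <;> simp_all

lemma zConf_tri (k : ℕ) : zConf (tri k : ℤ) = true := (zConf_eq_true_iff _).mpr ⟨k, rfl⟩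

/-- If `i` carries a `1` (at the triangular number `tri a`), there is a `1` sitting
`d` steps further, and everything in between is `0`, then `d = a + 1` and that next
`1` sits at `tri (a + 1)`. -/
lemma core {i : ℤ} {d a : ℕ} (hd : 0 < d) (hi : i = (tri a : ℤ))
    (h2 : zConf (i + d) = true)
    (hmid : ∀ j : ℕ, 1 ≤ j → j < d → zConf (i + j) = false) :
    d = a + 1 ∧ i + d = (tri (a + 1) : ℤ) := by
  obtain ⟨b, hb⟩ := (zConf_eq_true_iff _).mp h2
  have key : tri b = tri a + d := by omega
  have hab : a < b := tri_strictMono.lt_iff_lt.mp (by omega)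
  have hle : tri (a + 1) ≤ tri b := tri_strictMono.monotone hab
  have hs := tri_succ a
  rcases lt_trichotomy d (a + 1) with h | h | h
  · omega
  · exact ⟨h, by omega⟩
  · have hm := hmid (a + 1) (by omega) h
    have : zConf (i + (a + 1 : ℕ)) = true := by
      have he : i + ((a + 1 : ℕ) : ℤ) = (tri (a + 1) : ℤ) := by push_cast; omega
      rw [he]; exact zConf_tri _
    simp_all

/-- `z` belongs to the shift space and is not ultimately periodic to the right. -/
theorem stmt_9 :
    zConf ∈ Zspace ∧
      ¬ ∃ p : ℤ, 0 < p ∧ ∃ N : ℤ, ∀ n : ℤ, N ≤ n → zConf (n + p) = zConf n := by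
  constructor
  · -- membership in the shift space
    intro w hw ⟨i, h⟩
    have hg : ∀ (j : ℕ) (hj : j < w.length), zConf (i + j) = w[j] := by
      intro j hj
      simpa using h ⟨j, hj⟩
    rcases hw with (⟨m, hm, hweq⟩ | ⟨n, hweq⟩) | ⟨n, hweq⟩
    · -- w = 0^m 1 0^m 1
      subst hweq
      have hlen : (List.replicate m false ++ [true] ++ List.replicate m false ++
          [true]).length = 2 * m + 2 := by simp <;> omega
      -- position m is a 1
      have h1 : zConf (i + (m : ℕ)) = true := by
        rw [hg m (by omega)]
        rw [List.getElem_append_left (by simp <;> omega),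
            List.getElem_append_left (by simp <;> omega),
            List.getElem_append_right (by simp <;> omega)]
        simp
      -- positions m+1 .. 2m are 0
      have h0 : ∀ j : ℕ, 1 ≤ j → j < m + 1 → zConf (i + (m : ℕ) + j) = false := by
        intro j hj1 hj2
        have := hg (m + j) (by omega)
        rw [List.getElem_append_left (by simp <;> omega),
            List.getElem_append_right (by simp <;> omega), List.getElem_replicate] at this
        rw [← this]; congr 1; push_cast; ring
      -- position 2m+1 is a 1
      have h2 : zConf (i + (m : ℕ) + ((m + 1 : ℕ) : ℤ)) = true := by
        have := hg ((List.replicate m false ++ [true] ++ List.replicate m false).length)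
          (by simp <;> omega)
        rw [List.getElem_concat_length rfl] at this
        simp only [List.length_append, List.length_replicate, List.length_cons,
          List.length_nil] at this
        rw [← this]; congr 1; push_cast; ring
      obtain ⟨a, ha⟩ := (zConf_eq_true_iff _).mp h1
      obtain ⟨hd, _⟩ := core (i := i + (m : ℕ)) (d := m + 1) (a := a) (by omega) ha h2 h0
      -- so a = m, and then position 0 is tri (m-1), a 1, contradiction
      have ham : a = m := by omega
      subst ham
      have hzero : zConf (i + (0 : ℕ)) = false := by
        rw [hg 0 (by omega)]
        rw [List.getElem_append_left (by simp <;> omega),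
            List.getElem_append_left (by simp <;> omega),
            List.getElem_append_left (by simp <;> omega), List.getElem_replicate]
      have hi0 : i + ((0 : ℕ) : ℤ) = (tri (a - 1) : ℤ) := by
        have hs := tri_succ (a - 1)
        have hsa : a - 1 + 1 = a := by omega
        rw [hsa] at hs
        push_cast
        omega
      rw [hi0, zConf_tri] at hzero
      exact Bool.noConfusion hzero
    · -- w = 1 0^n 1 1
      subst hweq
      have hlen : (([true] ++ List.replicate n false ++ [true, true]) : List Bool).length
          = n + 3 := by simp <;> omega
      have h1 : zConf (i + (0 : ℕ)) = true := by
        rw [hg 0 (by omega)]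
        rw [List.getElem_append_left (by simp <;> omega)]
        simp
      have hA : zConf (i + ((n + 1 : ℕ) : ℤ)) = true := by
        have := hg (n + 1) (by omega)
        rw [List.getElem_append_right (by simp <;> omega)] at this
        simp at this
        push_cast at this ⊢
        exact this
      have hB : zConf (i + ((n + 2 : ℕ) : ℤ)) = true := by
        have := hg (n + 2) (by omega)
        rw [List.getElem_append_right (by simp <;> omega)] at this
        simp at this
        push_cast at this ⊢
        exact this
      obtain ⟨k, hk⟩ := (zConf_eq_true_iff _).mp h1
      obtain ⟨a, ha⟩ := (zConf_eq_true_iff _).mp hA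
      obtain ⟨b, hb⟩ := (zConf_eq_true_iff _).mp hB
      have hab : a < b := tri_strictMono.lt_iff_lt.mp (by push_cast at ha hb ⊢; omega)
      have hle : tri (a + 1) ≤ tri b := tri_strictMono.monotone hab
      have hs := tri_succ a
      -- tri b = tri a + 1, forces a = 0, so i = -(n+1) < 0; but i = tri k ≥ 0
      have ha0 : a = 0 := by push_cast at ha hb; omega
      have htri0 : tri a = 0 := by rw [ha0]; rfl
      have hknn : (0 : ℤ) ≤ (tri k : ℤ) := by positivity
      push_cast at ha hk
      omega
    · -- w = 1 0^n 1 0^(n+2)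
      subst hweq
      have hlen : (([true] ++ List.replicate n false ++ [true] ++
          List.replicate (n + 2) false) : List Bool).length = 2 * n + 4 := by simp <;> omega
      have h1 : zConf (i + (0 : ℕ)) = true := by
        rw [hg 0 (by omega)]
        rw [List.getElem_append_left (by simp <;> omega),
            List.getElem_append_left (by simp <;> omega),
            List.getElem_append_left (by simp <;> omega)]
        simp
      have h0 : ∀ j : ℕ, 1 ≤ j → j < n + 1 → zConf (i + (0 : ℕ) + j) = false := by
        intro j hj1 hj2
        have := hg j (by omega)
        rw [List.getElem_append_left (by simp <;> omega),
            List.getElem_append_left (by simp <;> omega),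
            List.getElem_append_right (by simp <;> omega), List.getElem_replicate] at this
        rw [← this]; congr 1; push_cast; ring
      have h2 : zConf (i + (0 : ℕ) + ((n + 1 : ℕ) : ℤ)) = true := by
        have := hg (n + 1) (by omega)
        rw [List.getElem_append_left (by simp <;> omega),
            List.getElem_append_right (by simp <;> omega)] at this
        simp at this
        rw [← this]; congr 1; push_cast; ring
      obtain ⟨a, ha⟩ := (zConf_eq_true_iff _).mp h1
      have ha' : i + ((0 : ℕ) : ℤ) = (tri a : ℤ) := by push_cast; omega
      obtain ⟨hd, hnext⟩ := core (i := i + (0 : ℕ)) (d := n + 1) (a := a)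
        (by omega) ha' h2 h0
      -- a = n; position 2n+3 should be 0, but it is tri (a+1+1)
      have hbad : zConf (i + ((2 * n + 3 : ℕ) : ℤ)) = false := by
        have := hg (2 * n + 3) (by omega)
        rw [List.getElem_append_right (by simp <;> omega), List.getElem_replicate] at this
        rw [← this]
      have hs := tri_succ (a + 1)
      have heq : i + ((2 * n + 3 : ℕ) : ℤ) = (tri (a + 1 + 1) : ℤ) := by
        push_cast at hnext ⊢; omega
      rw [heq, zConf_tri] at hbad
      exact Bool.noConfusion hbad
  · -- not ultimately periodic to the right
    rintro ⟨p, hp, N, hper⟩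
    set k : ℕ := p.toNat + N.toNat + 1 with hk
    have h1 : k ≤ tri k := tri_ge k
    have htk : N ≤ ((tri k : ℕ) : ℤ) := by omega
    have hper1 := hper (tri k) htk
    rw [zConf_tri] at hper1
    obtain ⟨b, hb⟩ := (zConf_eq_true_iff _).mp hper1
    have hab : k < b := tri_strictMono.lt_iff_lt.mp (by omega)
    have hle : tri (k + 1) ≤ tri b := tri_strictMono.monotone hab
    have hs := tri_succ k
    omega
end

section
/- The shift space Z ⊆ {0,1}^ℤ defined by forbidding 0^m 1 0^m 1 for all m > 0, and 1 0ⁿ 1 1 and 1 0ⁿ 1 0^{n+2} for all n ≥ 0, is countable: it consists exactly of the shift-orbit of the configuration z with strictly increasing gaps between 1s, the shift-orbit of the configuration with a single 1, and the all-zero configuration. -/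
attribute [local instance] Classical.propDecidable

/-! ### Triangular numbers -/

def T (k : ℕ) : ℕ := k * (k + 1) / 2

lemma T_succ (k : ℕ) : T (k + 1) = T k + (k + 1) := by
  have e : (k+1) * (k+1+1) = k * (k+1) + 2*(k+1) := by ring
  have d1 : 2 ∣ k * (k+1) := (Nat.even_mul_succ_self k).two_dvd
  have d2 : 2 ∣ (k+1) * (k+1+1) := (Nat.even_mul_succ_self (k+1)).two_dvd
  unfold T
  omega

lemma T_strictMono : StrictMono T :=
  strictMono_nat_of_lt_succ (fun k => by rw [T_succ]; omega)

lemma zConf_true_iff (n : ℤ) : zConf n = true ↔ ∃ k : ℕ, n = (T k : ℤ) := by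
  rw [zConf]
  split_ifs with h <;> simp [T] at h ⊢ <;> exact h

/-! ### The three words -/

def w1 (m : ℕ) : List Bool :=
  List.replicate m false ++ [true] ++ List.replicate m false ++ [true]
def w2 (n : ℕ) : List Bool := [true] ++ List.replicate n false ++ [true, true]
def w3 (n : ℕ) : List Bool :=
  [true] ++ List.replicate n false ++ [true] ++ List.replicate (n + 2) false

lemma w1_len (m : ℕ) : (w1 m).length = 2*m+2 := by simp [w1]; omega
lemma w2_len (n : ℕ) : (w2 n).length = n+3 := by simp [w2]
lemma w3_len (n : ℕ) : (w3 n).length = 2*n+4 := by simp [w3]; omega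

lemma w1_mem (m : ℕ) (hm : 0 < m) : w1 m ∈ Forb := Or.inl (Or.inl ⟨m, hm, rfl⟩)
lemma w2_mem (n : ℕ) : w2 n ∈ Forb := Or.inl (Or.inr ⟨n, rfl⟩)
lemma w3_mem (n : ℕ) : w3 n ∈ Forb := Or.inr ⟨n, rfl⟩

lemma w1_get (m j : ℕ) (h : j < (w1 m).length) :
    (w1 m)[j] = decide (j = m ∨ j = 2*m+1) := by
  rw [w1_len] at h
  simp only [w1, List.getElem_append, List.getElem_replicate, List.length_append,
    List.length_replicate, List.length_cons, List.length_nil]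
  split_ifs with h1 h2 h3 <;> simp_all <;> omega

lemma w2_get (n j : ℕ) (h : j < (w2 n).length) :
    (w2 n)[j] = decide (j = 0 ∨ j = n+1 ∨ j = n+2) := by
  rw [w2_len] at h
  simp only [w2, List.getElem_append, List.getElem_replicate, List.length_append,
    List.length_replicate, List.length_cons, List.length_nil]
  split_ifs with h1 h2
  · simp_all; omega
  · simp_all; constructor <;> omega
  · have hc : j - (0 + 1 + n) = 0 ∨ j - (0 + 1 + n) = 1 := by omega
    rcases hc with hc | hc <;> simp only [hc] <;> simp <;> omega

lemma w3_get (n j : ℕ) (h : j < (w3 n).length) :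
    (w3 n)[j] = decide (j = 0 ∨ j = n+1) := by
  rw [w3_len] at h
  simp only [w3, List.getElem_append, List.getElem_replicate, List.length_append,
    List.length_replicate, List.length_cons, List.length_nil]
  split_ifs with h1 h2 h3 <;> simp_all <;> omega

lemma occursIn_of (p : List Bool) (x : ℤ → Bool) (i : ℤ)
    (h : ∀ j : ℕ, (hj : j < p.length) → x (i + j) = p[j]) : occursIn p x :=
  ⟨i, fun j => by rw [List.get_eq_getElem]; exact h j.1 j.2⟩

/-! ### Semantic forms of the forbidden patterns -/

lemma notA {x : ℤ → Bool} (hx : x ∈ Zspace) (q : ℤ) (m : ℕ) (hm : 0 < m)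
    (h1 : x q = true) (h2 : x (q + m + 1) = true)
    (hpre : ∀ j : ℕ, j < m → x (q - m + j) = false)
    (hmid : ∀ j : ℕ, j < m → x (q + 1 + j) = false) : False := by
  apply hx (w1 m) (w1_mem m hm)
  apply occursIn_of (w1 m) x (q - m)
  intro j hj
  rw [w1_get m j hj]
  rw [w1_len] at hj
  by_cases e1 : j = m
  · rw [show q - (m:ℤ) + (j:ℕ) = q by omega, h1]
    simp [e1]
  · by_cases e2 : j = 2*m+1
    · subst e2
      rw [show q - (m:ℤ) + ((2*m+1 : ℕ):ℤ) = q + m + 1 by push_cast; omega, h2]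
      simp
    · have : decide (j = m ∨ j = 2*m+1) = false := by simp [e1, e2]
      rw [this]
      rcases Nat.lt_or_ge j m with hc | hc
      · exact hpre j hc
      · have hj' : m + 1 ≤ j := by omega
        rw [show q - (m:ℤ) + (j:ℕ) = q + 1 + ((j - (m+1) : ℕ) : ℤ) by omega]
        exact hmid _ (by omega)

lemma notB {x : ℤ → Bool} (hx : x ∈ Zspace) (p : ℤ) (n : ℕ)
    (h1 : x p = true) (h2 : x (p + n + 1) = true) (h3 : x (p + n + 2) = true)
    (hmid : ∀ j : ℕ, j < n → x (p + 1 + j) = false) : False := by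
  apply hx (w2 n) (w2_mem n)
  apply occursIn_of (w2 n) x p
  intro j hj
  rw [w2_get n j hj]
  rw [w2_len] at hj
  by_cases e1 : j = 0
  · subst e1; simpa using h1
  · by_cases e2 : j = n+1
    · subst e2
      rw [show p + ((n+1 : ℕ):ℤ) = p + n + 1 by push_cast; omega, h2]; simp
    · by_cases e3 : j = n+2
      · subst e3
        rw [show p + ((n+2 : ℕ):ℤ) = p + n + 2 by push_cast; omega, h3]; simp
      · have : decide (j = 0 ∨ j = n+1 ∨ j = n+2) = false := by simp [e1, e2, e3]
        rw [this]
        rw [show p + (j:ℕ) = p + 1 + ((j - 1 : ℕ) : ℤ) by omega]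
        exact hmid _ (by omega)

lemma notC {x : ℤ → Bool} (hx : x ∈ Zspace) (p : ℤ) (n : ℕ)
    (h1 : x p = true) (h2 : x (p + n + 1) = true)
    (hmid : ∀ j : ℕ, j < n → x (p + 1 + j) = false)
    (hpost : ∀ j : ℕ, j < n + 2 → x (p + n + 2 + j) = false) : False := by
  apply hx (w3 n) (w3_mem n)
  apply occursIn_of (w3 n) x p
  intro j hj
  rw [w3_get n j hj]
  rw [w3_len] at hj
  by_cases e1 : j = 0
  · subst e1; simpa using h1
  · by_cases e2 : j = n+1
    · subst e2
      rw [show p + ((n+1 : ℕ):ℤ) = p + n + 1 by push_cast; omega, h2]; simp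
    · have : decide (j = 0 ∨ j = n+1) = false := by simp [e1, e2]
      rw [this]
      rcases Nat.lt_or_ge j (n+1) with hc | hc
      · rw [show p + (j:ℕ) = p + 1 + ((j - 1 : ℕ) : ℤ) by omega]
        exact hmid _ (by omega)
      · rw [show p + (j:ℕ) = p + n + 2 + ((j - (n+2) : ℕ) : ℤ) by omega]
        exact hpost _ (by omega)

/-! ### Occurrence accessors -/

lemma occ1 {x : ℤ → Bool} {m : ℕ} {i : ℤ}
    (hi : ∀ j : Fin (w1 m).length, x (i + (j : ℕ)) = (w1 m).get j) :
    ∀ j : ℕ, j < 2*m+2 → x (i + j) = decide (j = m ∨ j = 2*m+1) := by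
  intro j hj
  have hj' : j < (w1 m).length := by rw [w1_len]; omega
  have := hi ⟨j, hj'⟩
  rwa [List.get_eq_getElem, w1_get m j hj'] at this

lemma occ2 {x : ℤ → Bool} {n : ℕ} {i : ℤ}
    (hi : ∀ j : Fin (w2 n).length, x (i + (j : ℕ)) = (w2 n).get j) :
    ∀ j : ℕ, j < n+3 → x (i + j) = decide (j = 0 ∨ j = n+1 ∨ j = n+2) := by
  intro j hj
  have hj' : j < (w2 n).length := by rw [w2_len]; omega
  have := hi ⟨j, hj'⟩
  rwa [List.get_eq_getElem, w2_get n j hj'] at this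

lemma occ3 {x : ℤ → Bool} {n : ℕ} {i : ℤ}
    (hi : ∀ j : Fin (w3 n).length, x (i + (j : ℕ)) = (w3 n).get j) :
    ∀ j : ℕ, j < 2*n+4 → x (i + j) = decide (j = 0 ∨ j = n+1) := by
  intro j hj
  have hj' : j < (w3 n).length := by rw [w3_len]; omega
  have := hi ⟨j, hj'⟩
  rwa [List.get_eq_getElem, w3_get n j hj'] at this

/-! ### Backward inclusion: the three families lie in `Zspace` -/

lemma zero_mem : (fun _ : ℤ => false) ∈ Zspace := by
  rintro w ((⟨m, hm, hw⟩ | ⟨n, hw⟩) | ⟨n, hw⟩) hocc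
  · have hw' : w = w1 m := hw
    subst hw'
    obtain ⟨i, hi⟩ := hocc
    have := occ1 (x := fun _ => false) (m := m) (i := i) hi m (by omega)
    simp at this
  · have hw' : w = w2 n := hw
    subst hw'
    obtain ⟨i, hi⟩ := hocc
    have := occ2 (x := fun _ => false) (n := n) (i := i) hi 0 (by omega)
    simp at this
  · have hw' : w = w3 n := hw
    subst hw'
    obtain ⟨i, hi⟩ := hocc
    have := occ3 (x := fun _ => false) (n := n) (i := i) hi 0 (by omega)
    simp at this

lemma ite_true_elim {p : Prop} [Decidable p] (h : (if p then true else false) = true) : p := by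
  by_contra hn; rw [if_neg hn] at h; exact Bool.false_ne_true h

lemma single_mem (k : ℤ) : (fun n : ℤ => if n = k then true else false) ∈ Zspace := by
  rintro w ((⟨m, hm, hw⟩ | ⟨n, hw⟩) | ⟨n, hw⟩) hocc
  · have hw' : w = w1 m := hw
    subst hw'
    obtain ⟨i, hi⟩ := hocc
    have t1 := occ1 (x := fun n : ℤ => if n = k then true else false) (m := m) (i := i) hi m (by omega)
    have t2 := occ1 (x := fun n : ℤ => if n = k then true else false) (m := m) (i := i) hi (2*m+1) (by omega)
    have e1 : i + ((m:ℕ):ℤ) = k := ite_true_elim (show (if i + ((m:ℕ):ℤ) = k then true else false) = true from t1.trans (by simp))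
    have e2 : i + ((2*m+1:ℕ):ℤ) = k := ite_true_elim (show (if i + ((2*m+1:ℕ):ℤ) = k then true else false) = true from t2.trans (by simp))
    push_cast at e1 e2
    omega
  · have hw' : w = w2 n := hw
    subst hw'
    obtain ⟨i, hi⟩ := hocc
    have t1 := occ2 (x := fun n : ℤ => if n = k then true else false) (n := n) (i := i) hi 0 (by omega)
    have t2 := occ2 (x := fun n : ℤ => if n = k then true else false) (n := n) (i := i) hi (n+1) (by omega)
    have e1 : i + ((0:ℕ):ℤ) = k := ite_true_elim (show (if i + ((0:ℕ):ℤ) = k then true else false) = true from t1.trans (by simp))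
    have e2 : i + ((n+1:ℕ):ℤ) = k := ite_true_elim (show (if i + ((n+1:ℕ):ℤ) = k then true else false) = true from t2.trans (by simp))
    push_cast at e1 e2
    omega
  · have hw' : w = w3 n := hw
    subst hw'
    obtain ⟨i, hi⟩ := hocc
    have t1 := occ3 (x := fun n : ℤ => if n = k then true else false) (n := n) (i := i) hi 0 (by omega)
    have t2 := occ3 (x := fun n : ℤ => if n = k then true else false) (n := n) (i := i) hi (n+1) (by omega)
    have e1 : i + ((0:ℕ):ℤ) = k := ite_true_elim (show (if i + ((0:ℕ):ℤ) = k then true else false) = true from t1.trans (by simp))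
    have e2 : i + ((n+1:ℕ):ℤ) = k := ite_true_elim (show (if i + ((n+1:ℕ):ℤ) = k then true else false) = true from t2.trans (by simp))
    push_cast at e1 e2
    omega

lemma zConf_mem : zConf ∈ Zspace := by
  rintro w ((⟨m, hm, hw⟩ | ⟨n, hw⟩) | ⟨n, hw⟩) hocc
  · have hw' : w = w1 m := hw
    subst hw'
    obtain ⟨i, hi⟩ := hocc
    have H := occ1 (x := zConf) (m := m) (i := i) hi
    have t1 : zConf (i + ((m:ℕ):ℤ)) = true := (H m (by omega)).trans (by simp)
    have t2 : zConf (i + ((2*m+1:ℕ):ℤ)) = true := (H (2*m+1) (by omega)).trans (by simp)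
    obtain ⟨k, hk⟩ := (zConf_true_iff _).1 t1
    obtain ⟨l, hl⟩ := (zConf_true_iff _).1 t2
    have hTk1 : T (k+1) = T k + (k+1) := T_succ k
    have hkl : k < l := by
      have : T k < T l := by push_cast at hk hl; omega
      exact T_strictMono.lt_iff_lt.mp this
    have hTl : T (k+1) ≤ T l := T_strictMono.monotone (by omega)
    have hkem : k = m := by
      by_contra hne
      have hklt : k < m := by push_cast at hk hl; omega
      have hfalse := H (m+k+1) (by omega)
      have htru : zConf (i + ((m+k+1:ℕ):ℤ)) = true := by
        rw [zConf_true_iff]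
        exact ⟨k+1, by push_cast at hk ⊢; omega⟩
      rw [htru] at hfalse
      simp at hfalse
      omega
    subst hkem
    have hTm : T k = T (k-1) + k := by
      have h := T_succ (k-1)
      rw [Nat.sub_add_cancel (by omega)] at h
      omega
    have hfalse := H 0 (by omega)
    have htru : zConf (i + ((0:ℕ):ℤ)) = true := by
      rw [zConf_true_iff]
      exact ⟨k-1, by push_cast at hk ⊢; omega⟩
    rw [htru] at hfalse
    simp at hfalse
    omega
  · have hw' : w = w2 n := hw
    subst hw'
    obtain ⟨i, hi⟩ := hocc
    have H := occ2 (x := zConf) (n := n) (i := i) hi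
    have t0 : zConf (i + ((0:ℕ):ℤ)) = true := (H 0 (by omega)).trans (by simp)
    have t1 : zConf (i + ((n+1:ℕ):ℤ)) = true := (H (n+1) (by omega)).trans (by simp)
    have t2 : zConf (i + ((n+2:ℕ):ℤ)) = true := (H (n+2) (by omega)).trans (by simp)
    obtain ⟨k0, hk0⟩ := (zConf_true_iff _).1 t0
    obtain ⟨k, hk⟩ := (zConf_true_iff _).1 t1
    obtain ⟨l, hl⟩ := (zConf_true_iff _).1 t2
    have hTk1 : T (k+1) = T k + (k+1) := T_succ k
    have hkl : k < l := by
      have : T k < T l := by push_cast at hk hl; omega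
      exact T_strictMono.lt_iff_lt.mp this
    have hTl : T (k+1) ≤ T l := T_strictMono.monotone (by omega)
    have hk00 : k = 0 := by push_cast at hk hl; omega
    subst hk00
    have hT0 : T 0 = 0 := rfl
    push_cast at hk hk0
    omega
  · have hw' : w = w3 n := hw
    subst hw'
    obtain ⟨i, hi⟩ := hocc
    have H := occ3 (x := zConf) (n := n) (i := i) hi
    have t0 : zConf (i + ((0:ℕ):ℤ)) = true := (H 0 (by omega)).trans (by simp)
    have t1 : zConf (i + ((n+1:ℕ):ℤ)) = true := (H (n+1) (by omega)).trans (by simp)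
    obtain ⟨k, hk⟩ := (zConf_true_iff _).1 t0
    obtain ⟨l, hl⟩ := (zConf_true_iff _).1 t1
    have hTk1 : T (k+1) = T k + (k+1) := T_succ k
    have hkl : k < l := by
      have : T k < T l := by push_cast at hk hl; omega
      exact T_strictMono.lt_iff_lt.mp this
    have hTl : T (k+1) ≤ T l := T_strictMono.monotone (by omega)
    have hkn : k ≤ n := by push_cast at hk hl; omega
    have hken : k = n := by
      by_contra hne
      have hklt : k < n := by omega
      have hfalse := H (k+1) (by omega)
      have htru : zConf (i + ((k+1:ℕ):ℤ)) = true := by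
        rw [zConf_true_iff]
        exact ⟨k+1, by push_cast at hk ⊢; omega⟩
      rw [htru] at hfalse
      simp at hfalse
      omega
    subst hken
    have hTk2 : T (k+1+1) = T (k+1) + (k+1+1) := T_succ (k+1)
    have hfalse := H (2*k+3) (by omega)
    have htru : zConf (i + ((2*k+3:ℕ):ℤ)) = true := by
      rw [zConf_true_iff]
      exact ⟨k+1+1, by push_cast at hk ⊢; omega⟩
    rw [htru] at hfalse
    simp at hfalse
    omega

lemma shift_mem {x : ℤ → Bool} (hx : x ∈ Zspace) (k : ℤ) :
    (fun n => x (n + k)) ∈ Zspace := by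
  intro w hw hocc
  obtain ⟨i, hi⟩ := hocc
  refine hx w hw ⟨i + k, fun j => ?_⟩
  have h : x (i + (j:ℕ) + k) = w.get j := hi j
  rwa [show i + ((j:ℕ):ℤ) + k = i + k + ((j:ℕ):ℤ) by ring] at h

/-! ### Forward direction -/

lemma not_true_false {b : Bool} (h : b = true → False) : b = false := by
  cases b
  · rfl
  · exact absurd rfl h

lemma exists_least_above {x : ℤ → Bool} (q b : ℤ) (hb : x b = true) (hqb : q < b) :
    ∃ d, (x d = true ∧ q < d) ∧ ∀ r, (x r = true ∧ q < r) → d ≤ r :=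
  Int.exists_least_of_bdd ⟨q+1, fun z hz => by omega⟩ ⟨b, hb, hqb⟩

lemma exists_min {x : ℤ → Bool} (hx : x ∈ Zspace) (a : ℤ) (ha : x a = true) :
    ∃ b, x b = true ∧ ∀ c, x c = true → b ≤ c := by
  by_contra hno
  push_neg at hno
  have pred : ∀ b : ℤ, x b = true →
      ∃ p, (x p = true ∧ p < b) ∧ ∀ r, (x r = true ∧ r < b) → r ≤ p := by
    intro b hb
    obtain ⟨c, hc, hcb⟩ := hno b hb
    exact Int.exists_greatest_of_bdd ⟨b, fun z hz => by omega⟩ ⟨c, hc, hcb⟩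
  obtain ⟨p, ⟨hp, hpa⟩, hmax⟩ := pred a ha
  have key : ∀ N : ℕ, ∀ p q : ℤ, x p = true → x q = true → p < q →
      (∀ r, p < r → r < q → x r = false) → (q - p).toNat ≤ N → False := by
    intro N
    induction N with
    | zero => intro p q hp hq hlt hbet hle; omega
    | succ N ih =>
      intro p q hp hq hlt hbet hle
      obtain ⟨p', ⟨hp', hp'p⟩, hmax'⟩ := pred p hp
      have hbet' : ∀ r, p' < r → r < p → x r = false := by
        intro r h1 h2
        apply not_true_false
        intro htr
        have := hmax' r ⟨htr, h2⟩
        omega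
      by_cases hg : q = p + 1
      · set n := (p - p' - 1).toNat with hn
        apply notB hx p' n hp'
        · rw [show p' + ((n:ℕ):ℤ) + 1 = p by omega]; exact hp
        · rw [show p' + ((n:ℕ):ℤ) + 2 = q by omega]; exact hq
        · intro j hj; exact hbet' (p' + 1 + j) (by omega) (by omega)
      · set m := (q - p - 1).toNat with hmdef
        have hm : 0 < m := by omega
        by_cases hfar : p' < p - m
        · apply notA hx p m hm hp
          · rw [show p + ((m:ℕ):ℤ) + 1 = q by omega]; exact hq
          · intro j hj; exact hbet' (p - m + j) (by omega) (by omega)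
          · intro j hj; exact hbet (p + 1 + j) (by omega) (by omega)
        · exact ih p' p hp' hp hp'p hbet' (by omega)
  have hbet0 : ∀ r, p < r → r < a → x r = false := by
    intro r h1 h2
    apply not_true_false
    intro htr
    have := hmax r ⟨htr, h2⟩
    omega
  exact key (a - p).toNat p a hp ha hpa hbet0 le_rfl

lemma T_between (M : ℕ) : ∃ k, T k ≤ M ∧ M < T (k+1) := by
  induction M with
  | zero =>
    have h0 : T 0 = 0 := rfl
    have h1 := T_succ 0
    exact ⟨0, by omega, by omega⟩
  | succ M ih =>
    obtain ⟨k, h1, h2⟩ := ih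
    by_cases h : M + 1 < T (k+1)
    · exact ⟨k, by omega, h⟩
    · have e1 := T_succ k
      have e2 := T_succ (k+1)
      exact ⟨k+1, by omega, by omega⟩

lemma forward {x : ℤ → Bool} (hx : x ∈ Zspace) :
    x ∈ {x : ℤ → Bool | ∃ k : ℤ, x = fun n => zConf (n + k)} ∪
        {x : ℤ → Bool | ∃ k : ℤ, x = fun n => if n = k then true else false} ∪
        {fun _ => false} := by
  by_cases hzero : ∀ n, x n = false
  · right
    exact funext hzero
  push_neg at hzero
  obtain ⟨a0, ha0⟩ := hzero
  have ha0' : x a0 = true := by cases h : x a0; exact absurd h ha0; rfl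
  obtain ⟨a, ha, hmin⟩ := exists_min hx a0 ha0'
  have hleft : ∀ r, r < a → x r = false := by
    intro r hr
    apply not_true_false
    intro htr
    have := hmin r htr
    omega
  by_cases hsingle : ∀ b, x b = true → b = a
  · left; right
    refine ⟨a, funext fun n => ?_⟩
    by_cases hn : n = a
    · subst hn; rw [if_pos rfl]; exact ha
    · rw [if_neg hn]
      apply not_true_false
      intro htr
      exact hn (hsingle n htr)
  · left; left
    push_neg at hsingle
    obtain ⟨b, hb, hbne⟩ := hsingle
    obtain ⟨c, ⟨hc, hac⟩, hcmin⟩ :=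
      exists_least_above a b hb (lt_of_le_of_ne (hmin b hb) (Ne.symm hbne))
    have hc1 : c = a + 1 := by
      by_contra hne
      have hm : 0 < (c - a - 1).toNat := by omega
      apply notA hx a _ hm ha
      · rw [show a + (((c - a - 1).toNat : ℕ):ℤ) + 1 = c by omega]; exact hc
      · intro j hj; exact hleft _ (by omega)
      · intro j hj
        apply not_true_false
        intro htr
        have := hcmin _ ⟨htr, by omega⟩
        omega
    have main : ∀ k : ℕ, x (a + (T k : ℤ)) = true ∧ x (a + (T (k+1) : ℤ)) = true ∧
        (∀ j : ℕ, j < k → x (a + (T k : ℤ) + 1 + j) = false) := by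
      intro k
      induction k with
      | zero =>
        have h0 : T 0 = 0 := rfl
        have h1 := T_succ 0
        refine ⟨?_, ?_, fun j hj => by omega⟩
        · rw [show a + ((T 0 : ℕ):ℤ) = a by omega]; exact ha
        · rw [show a + ((T (0+1) : ℕ):ℤ) = c by omega]; exact hc
      | succ k ih =>
        obtain ⟨h1, h2, h3⟩ := ih
        have Tsk : T (k+1) = T k + (k+1) := T_succ k
        have Tssk : T (k+1+1) = T (k+1) + (k+1+1) := T_succ (k+1)
        have hnext : ∃ d, x d = true ∧ a + (T (k+1) : ℤ) < d ∧
            d ≤ a + (T (k+1) : ℤ) + k + 2 := by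
          by_contra hno
          push_neg at hno
          apply notC hx (a + (T k : ℤ)) k h1
          · rw [show a + ((T k : ℕ):ℤ) + (k:ℤ) + 1 = a + (T (k+1) : ℤ) by omega]
            exact h2
          · exact h3
          · intro j hj
            apply not_true_false
            intro htr
            have := hno _ htr (by omega)
            omega
        obtain ⟨d0, hd0, hq0, hb0⟩ := hnext
        obtain ⟨d, ⟨hd, hqd⟩, hdmin⟩ := exists_least_above (a + (T (k+1) : ℤ)) d0 hd0 hq0
        have hbd : d ≤ a + (T (k+1) : ℤ) + k + 2 := le_trans (hdmin d0 ⟨hd0, hq0⟩) hb0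
        have hlow : a + (T (k+1) : ℤ) + k + 2 ≤ d := by
          by_contra hlt
          push_neg at hlt
          by_cases hadj : d = a + (T (k+1) : ℤ) + 1
          · apply notB hx (a + (T k : ℤ)) k h1
            · rw [show a + ((T k : ℕ):ℤ) + (k:ℤ) + 1 = a + (T (k+1) : ℤ) by omega]
              exact h2
            · rw [show a + ((T k : ℕ):ℤ) + (k:ℤ) + 2 = d by omega]
              exact hd
            · exact h3
          · have hm1 : 0 < (d - (a + (T (k+1) : ℤ)) - 1).toNat := by omega
            apply notA hx (a + (T (k+1) : ℤ)) _ hm1 h2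
            · rw [show a + ((T (k+1) : ℕ):ℤ) +
                  (((d - (a + (T (k+1) : ℤ)) - 1).toNat : ℕ):ℤ) + 1 = d by omega]
              exact hd
            · intro j hj
              rw [show a + ((T (k+1) : ℕ):ℤ) - ((d - (a + (T (k+1) : ℤ)) - 1).toNat : ℤ)
                  + (j:ℤ) = a + (T k : ℤ) + 1 +
                  ((k - (d - (a + (T (k+1) : ℤ)) - 1).toNat + j : ℕ) : ℤ) by omega]
              exact h3 _ (by omega)
            · intro j hj
              apply not_true_false
              intro htr
              have := hdmin _ ⟨htr, by omega⟩
              omega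
        refine ⟨h2, ?_, ?_⟩
        · rw [show a + ((T (k+1+1) : ℕ):ℤ) = d by omega]
          exact hd
        · intro j hj
          apply not_true_false
          intro htr
          have := hdmin _ ⟨htr, by omega⟩
          omega
    have hchar : ∀ n : ℤ, x n = true ↔ ∃ k : ℕ, n = a + (T k : ℤ) := by
      intro n
      constructor
      · intro hn
        have hna : a ≤ n := hmin n hn
        obtain ⟨k, hk1, hk2⟩ : ∃ k : ℕ, (T k : ℤ) ≤ n - a ∧ n - a < (T (k+1) : ℤ) := by
          obtain ⟨k, u1, u2⟩ := T_between (n - a).toNat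
          exact ⟨k, by omega, by omega⟩
        refine ⟨k, ?_⟩
        by_contra hne
        have Tsk := T_succ k
        have h3 := (main k).2.2 (n - a - T k - 1).toNat (by omega)
        rw [show a + ((T k : ℕ):ℤ) + 1 + (((n - a - T k - 1).toNat : ℕ):ℤ) = n by omega] at h3
        rw [hn] at h3
        simp at h3
      · rintro ⟨k, rfl⟩
        exact (main k).1
    refine ⟨-a, funext fun n => ?_⟩
    have hz := zConf_true_iff (n + -a)
    have hcn := hchar n
    cases hxn : x n with
    | true =>
      exact ((hz.2 ⟨(Classical.choose (hcn.1 hxn)), by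
        have := Classical.choose_spec (hcn.1 hxn); omega⟩)).symm
    | false =>
      apply (not_true_false ?_).symm
      intro hzc
      obtain ⟨k, hk⟩ := hz.1 hzc
      have : x n = true := hcn.2 ⟨k, by omega⟩
      rw [this] at hxn
      simp at hxn

/-- `Zspace` consists exactly of the shift orbit of `zConf`, the orbit of the
configuration with a single `1`, and the all-zero configuration; in particular
it is countable. -/
theorem stmt_10 :
    Zspace = {x | ∃ k : ℤ, x = fun n => zConf (n + k)} ∪
        {x | ∃ k : ℤ, x = fun n => if n = k then true else false} ∪
        {fun _ => false} ∧
      Zspace.Countable := by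
  have heq : Zspace = {x : ℤ → Bool | ∃ k : ℤ, x = fun n => zConf (n + k)} ∪
      {x : ℤ → Bool | ∃ k : ℤ, x = fun n => if n = k then true else false} ∪
      {fun _ => false} := by
    apply Set.eq_of_subset_of_subset
    · intro x hx
      exact forward hx
    · rintro x ((⟨k, rfl⟩ | ⟨k, rfl⟩) | rfl)
      · exact shift_mem zConf_mem k
      · exact single_mem k
      · exact zero_mem
  refine ⟨heq, ?_⟩
  rw [heq]
  apply Set.Countable.union
  apply Set.Countable.union
  · exact Set.Countable.mono (by rintro x ⟨k, rfl⟩; exact ⟨k, rfl⟩)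
      (Set.countable_range (fun k : ℤ => fun n => zConf (n + k)))
  · exact Set.Countable.mono (by rintro x ⟨k, rfl⟩; exact ⟨k, rfl⟩)
      (Set.countable_range (fun k : ℤ => fun n : ℤ => if n = k then true else false))
  · exact Set.countable_singleton _
end

section
/- Let φ : X → Y be a factor map between ℤ²-shift spaces (a continuous surjection commuting with both shift maps), where X ⊆ Σ^(ℤ²) is countable. If y ∈ Y satisfies σ^(0,1)(y) = y (y is vertically constant in the vertical direction), then y has a preimage x ∈ φ⁻¹(y) with σ^(0,k)(x) = x for some k ≥ 1. -/
/-- The shift by a vector `v ∈ ℤ²` on two-dimensional configurations. -/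
def shift2 {A : Type*} (v : ℤ × ℤ) (x : ℤ × ℤ → A) : ℤ × ℤ → A := fun w => x (v + w)

open Classical Set Function

lemma not_countable_cantor : ¬ Countable (ℕ → Bool) := by
  intro h
  obtain ⟨f, hf⟩ := exists_injective_nat (ℕ → Bool)
  have hg : Function.Injective (fun s : Set ℕ => (fun n => decide (n ∈ s) : ℕ → Bool)) := by
    intro s t hst
    ext n
    simpa using congrFun hst n
  exact Function.cantor_injective (f ∘ _) (hf.comp hg)

lemma isolated_of_countable {α : Type*} [TopologicalSpace α] [PolishSpace α] {M : Set α}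
    (hcl : IsClosed M) (hne : M.Nonempty) (hct : M.Countable) :
    ∃ a ∈ M, ∃ U, IsOpen U ∧ U ∩ M = {a} := by
  by_contra h
  push_neg at h
  have hperf : Perfect M := by
    refine ⟨hcl, preperfect_iff_nhds.2 fun x hx U hU => ?_⟩
    obtain ⟨V, hVU, hVo, hxV⟩ := mem_nhds_iff.1 hU
    have hVM : V ∩ M ≠ {x} := h x hx V hVo
    have hxVM : x ∈ V ∩ M := ⟨hxV, hx⟩
    by_contra hcon
    push_neg at hcon
    apply hVM
    ext z
    constructor
    · intro hz
      by_contra hzx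
      exact hzx (hcon z ⟨hVU hz.1, hz.2⟩)
    · rintro rfl; exact hxVM
  letI := TopologicalSpace.upgradeIsCompletelyMetrizable α
  obtain ⟨f, hfr, -, hfi⟩ := hperf.exists_nat_bool_injection hne
  have : Countable (ℕ → Bool) := by
    have h1 : (range f).Countable := hct.mono hfr
    have := h1.to_subtype
    exact Countable.of_equiv _ (Equiv.ofInjective f hfi).symm
  exact not_countable_cantor this


lemma shift2_comp {A : Type*} (v w : ℤ × ℤ) (x : ℤ × ℤ → A) :
    shift2 v (shift2 w x) = shift2 (w + v) x := by
  funext u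
  simp [shift2, add_assoc]

lemma shift2_continuous {A : Type*} [TopologicalSpace A] (v : ℤ × ℤ) :
    Continuous (shift2 (A := A) v) :=
  continuous_pi fun w => continuous_apply _

lemma shift2_iterate {A : Type*} (n : ℕ) (x : ℤ × ℤ → A) :
    (shift2 ((0 : ℤ), (1 : ℤ)))^[n] x = shift2 (0, (n : ℤ)) x := by
  induction n with
  | zero => funext u; simp [shift2, Prod.mk_zero_zero]
  | succ n ih =>
      rw [Function.iterate_succ_apply', ih, shift2_comp]
      norm_num

/-- If `φ : X → Y` is a factor map of two-dimensional shift spaces with `X`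
countable, then every vertically constant `y ∈ Y` has a vertically periodic
`φ`-preimage. -/
theorem stmt_12 {A B : Type*} [TopologicalSpace A] [DiscreteTopology A] [Finite A]
    [TopologicalSpace B] [DiscreteTopology B] [Finite B]
    (X : Set (ℤ × ℤ → A)) (Y : Set (ℤ × ℤ → B))
    (hXcl : IsClosed X) (hXinv : ∀ v : ℤ × ℤ, ∀ x ∈ X, shift2 v x ∈ X)
    (hYcl : IsClosed Y) (hYinv : ∀ v : ℤ × ℤ, ∀ y ∈ Y, shift2 v y ∈ Y)
    (φ : (ℤ × ℤ → A) → (ℤ × ℤ → B)) (hφc : Continuous φ)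
    (hφcomm : ∀ (v : ℤ × ℤ) (x : ℤ × ℤ → A), φ (shift2 v x) = shift2 v (φ x))
    (hφim : φ '' X = Y) (hXcount : X.Countable)
    (y : ℤ × ℤ → B) (hy : y ∈ Y) (hyv : shift2 ((0 : ℤ), (1 : ℤ)) y = y) :
    ∃ x ∈ X, φ x = y ∧ ∃ k : ℤ, 1 ≤ k ∧ shift2 (0, k) x = x := by
  haveI : Countable A := Finite.to_countable
  haveI : PolishSpace (ℤ × ℤ → A) := {}
  set T : (ℤ × ℤ → A) → (ℤ × ℤ → A) := shift2 ((0 : ℤ), (1 : ℤ)) with hT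
  have hTc : Continuous T := shift2_continuous _
  -- the fiber
  set F : Set (ℤ × ℤ → A) := X ∩ φ ⁻¹' {y} with hF
  have hFcl : IsClosed F := hXcl.inter (isClosed_singleton.preimage hφc)
  have hFne : F.Nonempty := by
    have : y ∈ φ '' X := hφim ▸ hy
    obtain ⟨x, hx, hxy⟩ := this
    exact ⟨x, hx, by simp [hxy]⟩
  have hFsubX : F ⊆ X := inter_subset_left
  have hFmap : MapsTo T F F := by
    rintro x ⟨hxX, hxy⟩
    refine ⟨hXinv _ _ hxX, ?_⟩
    simp only [mem_preimage, mem_singleton_iff] at hxy ⊢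
    rw [hT, hφcomm, hxy, hyv]
  have hFct : F.Countable := hXcount.mono hFsubX
  have hFcp : IsCompact F := hFcl.isCompact
  -- Zorn: minimal nonempty closed invariant subset
  set S : Set (Set (ℤ × ℤ → A)) :=
    {M | M ⊆ F ∧ M.Nonempty ∧ IsClosed M ∧ MapsTo T M M} with hS
  obtain ⟨M, hMF, hMmin⟩ := zorn_superset_nonempty S
    (fun c hcS hchain hcne => by
      refine ⟨⋂₀ c, ⟨?_, ?_, ?_, ?_⟩, fun s hs => sInter_subset_of_mem hs⟩
      · obtain ⟨s, hs⟩ := hcne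
        exact (sInter_subset_of_mem hs).trans (hcS hs).1
      · haveI : Nonempty c := hcne.to_subtype
        apply IsCompact.nonempty_sInter_of_directed_nonempty_isCompact_isClosed
        · intro s hs t ht
          rcases hchain.total hs ht with h | h
          · exact ⟨s, hs, subset_rfl, h⟩
          · exact ⟨t, ht, h, subset_rfl⟩
        · exact fun s hs => (hcS hs).2.1
        · exact fun s hs => ((hcS hs).2.2.1).isCompact
        · exact fun s hs => (hcS hs).2.2.1
      · exact isClosed_sInter fun s hs => (hcS hs).2.2.1
      · intro x hx
        exact fun s hs => (hcS hs).2.2.2 (hx s hs))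
    F ⟨subset_rfl, hFne, hFcl, hFmap⟩
  obtain ⟨hMS, hMminimal⟩ := hMmin
  obtain ⟨hMsubF, hMne, hMcl, hMmap⟩ := hMS
  -- isolated point of M
  obtain ⟨a, haM, U, hUo, hUM⟩ :=
    isolated_of_countable hMcl hMne (hFct.mono hMsubF)
  -- orbit closure of T a is all of M
  set g : ℕ → (ℤ × ℤ → A) := fun n => T^[n + 1] a with hg
  have hgM : ∀ n, g n ∈ M := by
    intro n
    induction n with
    | zero => exact hMmap haM
    | succ n ih =>
        have he : g (n + 1) = T (g n) := by
          simp only [hg]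
          rw [Function.iterate_succ_apply']
        rw [he]; exact hMmap ih
  set N : Set (ℤ × ℤ → A) := closure (range g) with hN
  have hNsubM : N ⊆ M := hMcl.closure_subset_iff.2 (range_subset_iff.2 hgM)
  have hNS : N ∈ S := by
    refine ⟨hNsubM.trans hMsubF, ⟨g 0, subset_closure ⟨0, rfl⟩⟩, isClosed_closure, ?_⟩
    have hmt : MapsTo T (range g) (range g) := by
      rintro _ ⟨n, rfl⟩
      exact ⟨n + 1, by rw [hg]; simp [Function.iterate_succ_apply']⟩
    exact hmt.closure hTc
  have hMN : M ⊆ N := hMminimal hNS hNsubM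
  -- a is in the closure of the forward orbit; being isolated it equals some iterate
  have haN : a ∈ N := hMN haM
  have : (U ∩ range g).Nonempty := by
    rw [hN, mem_closure_iff] at haN
    obtain ⟨z, hz⟩ := haN U hUo (by
      have : a ∈ U ∩ M := hUM ▸ rfl
      exact this.1)
    exact ⟨z, hz⟩
  obtain ⟨z, hzU, n, rfl⟩ := this
  have hzM : g n ∈ M := hgM n
  have hza : g n = a := by
    have : g n ∈ U ∩ M := ⟨hzU, hzM⟩
    rw [hUM] at this
    exact this
  refine ⟨a, hMsubF haM |>.1, (hMsubF haM).2, ((n : ℤ) + 1), by omega, ?_⟩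
  have hit := shift2_iterate (A := A) (n + 1) a
  rw [← hT] at hit
  have hza' : T^[n + 1] a = a := hza
  rw [hza'] at hit
  push_cast at hit
  exact hit.symm
end

section
/- Let G be a finite directed graph with edge set E, let X_G ⊆ E^ℤ be its edge shift, let λ : E → Γ be a right-resolving labeling, and let x ∈ X_G with λ(x) ultimately periodic to the right with period word u (i.e., λ(x)ₙ₊|u| = λ(x)ₙ for all n ≥ N). Then x is ultimately periodic to the right with period n·|u| for some 1 ≤ n ≤ |V(G)|. -/
/-- If `x` is a bi-infinite edge path in a finite graph, `lab` is a right-resolving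
labeling, and the label sequence of `x` is ultimately periodic to the right with
period `|u|`, then `x` itself is ultimately periodic to the right with period
`n·|u|` for some `1 ≤ n ≤ |V|`. -/
theorem stmt_14 {V E Γ : Type*} [Finite V] [Finite E]
    (gtail ghead : E → V) (lab : E → Γ)
    (hrr : ∀ e e' : E, gtail e = gtail e' → lab e = lab e' → e = e')
    (x : ℤ → E) (hpath : ∀ n : ℤ, ghead (x n) = gtail (x (n + 1)))
    (u : List Γ) (hu : u ≠ []) (N : ℤ)
    (hper : ∀ n : ℤ, N ≤ n → lab (x (n + (u.length : ℕ))) = lab (x n)) :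
    ∃ n : ℕ, 1 ≤ n ∧ n ≤ Nat.card V ∧
      ∃ N' : ℤ, ∀ m : ℤ, N' ≤ m → x (m + ((n * u.length : ℕ) : ℤ)) = x m := by
  have hV : Nonempty V := ⟨gtail (x 0)⟩
  set L : ℤ := (u.length : ℤ) with hL
  have hL0 : 0 ≤ L := by positivity
  -- iterated label periodicity
  have hlab : ∀ (k : ℕ) (m : ℤ), N ≤ m → lab (x (m + k * L)) = lab (x m) := by
    intro k
    induction k with
    | zero => simp
    | succ k ih =>
      intro m hm
      have h1 : lab (x ((m + k * L) + L)) = lab (x (m + k * L)) := by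
        have := hper (m + k * L) (by nlinarith)
        simpa [hL] using this
      have h2 : m + (k + 1 : ℕ) * L = (m + k * L) + L := by push_cast; ring
      rw [h2, h1, ih m hm]
  -- pigeonhole on tails
  have := Fintype.ofFinite V
  have hcard : Fintype.card V < Fintype.card (Fin (Nat.card V + 1)) := by
    simp [Nat.card_eq_fintype_card]
  obtain ⟨i, j, hij, hw⟩ := Fintype.exists_ne_map_eq_of_card_lt
    (fun k : Fin (Nat.card V + 1) => gtail (x (N + k * L))) hcard
  -- WLOG i < j
  wlog hlt : (i : ℕ) < (j : ℕ) generalizing i j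
  · exact this j i hij.symm hw.symm (by omega)
  set n : ℕ := (j : ℕ) - (i : ℕ) with hn
  refine ⟨n, by omega, by omega, N + i * L, ?_⟩
  set a : ℤ := N + i * L with ha
  have haN : N ≤ a := by nlinarith
  have hshift : a + (n : ℤ) * L = N + j * L := by
    have : (n : ℤ) = (j : ℤ) - i := by push_cast [hn]; omega
    rw [ha, this]; ring
  -- forward induction: x (a + t) = x (a + n*L + t) for all t : ℕ
  have key : ∀ t : ℕ, x (a + t) = x (a + n * L + t) := by
    intro t
    induction t with
    | zero =>
      simp only [Nat.cast_zero, add_zero]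
      apply hrr
      · rw [hshift]; exact hw
      · exact (hlab n a haN).symm
    | succ t ih =>
      have ht1 : a + (t + 1 : ℕ) = (a + t) + 1 := by push_cast; ring
      have ht2 : a + n * L + (t + 1 : ℕ) = (a + n * L + t) + 1 := by push_cast; ring
      rw [ht1, ht2]
      apply hrr
      · rw [← hpath, ← hpath, ih]
      · have := hlab n (a + t + 1) (by nlinarith)
        have h3 : a + t + 1 + n * L = a + n * L + t + 1 := by ring
        rw [h3] at this
        exact this.symm
  intro m hm
  obtain ⟨t, ht⟩ : ∃ t : ℕ, m = a + t := ⟨(m - a).toNat, by omega⟩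
  have := (key t).symm
  rw [ht]
  have h4 : a + t + ((n * u.length : ℕ) : ℤ) = a + n * L + t := by push_cast [hL]; ring
  rw [h4]
  exact this
end
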